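/- arXiv:1009.2369 — 3 statements merged into one kernel-verified Lean document; each statement's English description precedes it below -/
import Mathlib

section
/- Let X be a complex Banach space and let (x_k)_{k∈ℕ} be a family of vectors in X such that for every nonzero α ∈ ℓ¹(ℕ, ℂ) the sum ∑_k α_k x_k ≠ 0 (condition (C3)). Then for every doubly-indexed family b ∈ ℓ¹(ℕ², ℂ): if for every continuous linear functional f on X, ∑_{k₁,k₂} b_{k₁,k₂} f(x_{k₂}) x_{k₁} = 0 in X, then b = 0. -/
open Filter
open scoped ENNReal

section aux

variable {X : Type*} [NormedAddCommGroup X] [NormedSpace ℂ X]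

/-- Under (C3), every ℓ¹ family of coefficients gives a summable series. -/
lemma summable_of_C3 (x : ℕ → X)
    (hC3 : ∀ α : ℕ → ℂ, Summable (fun k => ‖α k‖) → α ≠ 0 →
      (∑' k, α k • x k) ≠ 0)
    (α : ℕ → ℂ) (hα : Summable fun k => ‖α k‖) :
    Summable (fun k => α k • x k) := by
  by_cases h0 : α = 0
  · subst h0
    simp only [Pi.zero_apply, zero_smul]
    exact summable_zero
  · by_contra hns
    exact hC3 α hα h0 (tsum_eq_zero_of_not_summable hns)

/-- Partial sum operators on ℓ¹. -/
noncomputable def TN (x : ℕ → X) (N : ℕ) : lp (fun _ : ℕ => ℂ) 1 →L[ℂ] X :=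
  LinearMap.mkContinuous
    { toFun := fun α => ∑ k ∈ Finset.range N, α k • x k
      map_add' := fun α β => by
        simp only [lp.coeFn_add, Pi.add_apply, add_smul, Finset.sum_add_distrib]
      map_smul' := fun c α => by
        simp only [lp.coeFn_smul, Pi.smul_apply, smul_eq_mul, RingHom.id_apply,
          Finset.smul_sum, mul_smul] }
    (∑ k ∈ Finset.range N, ‖x k‖)
    (by
      intro α
      simp only [LinearMap.coe_mk, AddHom.coe_mk]
      calc ‖∑ k ∈ Finset.range N, α k • x k‖
          ≤ ∑ k ∈ Finset.range N, ‖α k • x k‖ := norm_sum_le _ _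
        _ ≤ ∑ k ∈ Finset.range N, ‖x k‖ * ‖α‖ := by
            refine Finset.sum_le_sum fun k _ => ?_
            rw [norm_smul, mul_comm]
            exact mul_le_mul_of_nonneg_left
              (lp.norm_apply_le_norm one_ne_zero α k) (norm_nonneg _)
        _ = (∑ k ∈ Finset.range N, ‖x k‖) * ‖α‖ := by rw [Finset.sum_mul])

/-- Under (C3), the family `x` is bounded in norm. -/
lemma bounded_of_C3 [CompleteSpace X] (x : ℕ → X)
    (hC3 : ∀ α : ℕ → ℂ, Summable (fun k => ‖α k‖) → α ≠ 0 →
      (∑' k, α k • x k) ≠ 0) :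
    ∃ C : ℝ, ∀ k, ‖x k‖ ≤ C := by
  have hpt : ∀ α : lp (fun _ : ℕ => ℂ) 1, ∃ C, ∀ N, ‖TN x N α‖ ≤ C := by
    intro α
    have hα : Summable fun k => ‖(α : ∀ _ : ℕ, ℂ) k‖ := by
      have := lp.memℓp α
      rw [memℓp_gen_iff (by norm_num : 0 < (1 : ℝ≥0∞).toReal)] at this
      simpa [ENNReal.toReal_one] using this
    have hsum : Summable (fun k => (α : ∀ _ : ℕ, ℂ) k • x k) :=
      summable_of_C3 x hC3 _ hα
    have htends := hsum.hasSum.tendsto_sum_nat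
    have : Tendsto (fun N => ‖∑ k ∈ Finset.range N, (α : ∀ _ : ℕ, ℂ) k • x k‖)
        atTop (nhds ‖∑' k, (α : ∀ _ : ℕ, ℂ) k • x k‖) := htends.norm
    obtain ⟨C, hC⟩ := this.bddAbove_range
    refine ⟨C, fun N => ?_⟩
    exact hC ⟨N, rfl⟩
  obtain ⟨C', hC'⟩ := banach_steinhaus hpt
  refine ⟨C', fun k => ?_⟩
  have hval : TN x (k + 1) (lp.single 1 k (1 : ℂ)) = x k := by
    show (∑ j ∈ Finset.range (k + 1), (lp.single 1 k (1 : ℂ) : ∀ _ : ℕ, ℂ) j • x j) = x k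
    rw [Finset.sum_eq_single k]
    · rw [lp.single_apply_self]; simp
    · intro j _ hj
      rw [lp.single_apply_ne 1 k _ hj, zero_smul]
    · intro hk; exact absurd (Finset.self_mem_range_succ k) hk
  have hns : ‖lp.single (E := fun _ : ℕ => ℂ) 1 k (1 : ℂ)‖ = 1 := by
    have := lp.norm_single (E := fun _ : ℕ => ℂ) (p := 1) (by norm_num)
      k (1 : ℂ)
    simpa using this
  calc ‖x k‖ = ‖TN x (k + 1) (lp.single 1 k (1 : ℂ))‖ := by rw [hval]
    _ ≤ ‖TN x (k + 1)‖ * ‖lp.single (E := fun _ : ℕ => ℂ) 1 k (1 : ℂ)‖ :=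
        (TN x (k + 1)).le_opNorm _
    _ ≤ C' := by rw [hns, mul_one]; exact hC' (k + 1)

end aux

/-- under condition (C3), contraction against continuous linear
functionals detects vanishing of doubly-indexed ℓ¹ coefficient families. -/
theorem stmt2 (X : Type*) [NormedAddCommGroup X] [NormedSpace ℂ X] [CompleteSpace X]
    (x : ℕ → X)
    (hC3 : ∀ α : ℕ → ℂ, Summable (fun k => ‖α k‖) → α ≠ 0 →
      (∑' k, α k • x k) ≠ 0)
    (b : ℕ × ℕ → ℂ) (hb : Summable fun p => ‖b p‖)
    (h : ∀ f : X →L[ℂ] ℂ, (∑' p : ℕ × ℕ, (b p * f (x p.2)) • x p.1) = 0) :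
    b = 0 := by
  obtain ⟨C, hC⟩ := bounded_of_C3 x hC3
  have hC0 : 0 ≤ C := le_trans (norm_nonneg _) (hC 0)
  -- rows of b are ℓ¹
  have hrow : ∀ k₁, Summable fun k₂ => ‖b (k₁, k₂)‖ := fun k₁ => hb.prod_factor k₁
  -- For each functional f, the coefficient family in ℓ¹
  have key : ∀ f : X →L[ℂ] ℂ, ∀ k₁, (∑' k₂, b (k₁, k₂) * f (x k₂)) = 0 := by
    intro f
    -- absolute summability of the double family
    have habs : Summable fun p : ℕ × ℕ => ‖(b p * f (x p.2)) • x p.1‖ := by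
      apply Summable.of_nonneg_of_le (fun p => norm_nonneg _)
        (f := fun p => ‖b p‖ * (‖f‖ * C * C))
      · intro p
        rw [norm_smul, norm_mul]
        calc ‖b p‖ * ‖f (x p.2)‖ * ‖x p.1‖
            ≤ ‖b p‖ * (‖f‖ * C) * C := by
              gcongr
              · exact (f.le_opNorm _).trans (by gcongr; exact hC _)
              · exact hC _
          _ = ‖b p‖ * (‖f‖ * C * C) := by ring
      · exact hb.mul_right _
    have hsum : Summable fun p : ℕ × ℕ => (b p * f (x p.2)) • x p.1 := habs.of_norm
    -- inner coefficient summability for each k₁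
    have hinner : ∀ k₁, Summable fun k₂ => b (k₁, k₂) * f (x k₂) := by
      intro k₁
      refine Summable.of_norm (Summable.of_nonneg_of_le (fun k₂ => norm_nonneg _)
        (f := fun k₂ => ‖b (k₁, k₂)‖ * (‖f‖ * C)) ?_ ((hrow k₁).mul_right _))
      intro k₂
      rw [norm_mul]
      refine mul_le_mul_of_nonneg_left ?_ (norm_nonneg _)
      exact (f.le_opNorm _).trans (by gcongr; exact hC _)
    -- rearrange the double sum
    have hre : (∑' p : ℕ × ℕ, (b p * f (x p.2)) • x p.1)
        = ∑' k₁, (∑' k₂, b (k₁, k₂) * f (x k₂)) • x k₁ := by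
      rw [Summable.tsum_prod' hsum (fun k₁ => hsum.prod_factor k₁)]
      congr 1
      funext k₁
      exact Summable.tsum_smul_const (hinner k₁) (x k₁)
    set α : ℕ → ℂ := fun k₁ => ∑' k₂, b (k₁, k₂) * f (x k₂) with hα
    have hαsum : Summable fun k₁ => ‖α k₁‖ := by
      apply Summable.of_nonneg_of_le (fun k₁ => norm_nonneg _)
        (f := fun k₁ => ∑' k₂, ‖b (k₁, k₂)‖ * (‖f‖ * C))
      · intro k₁
        refine (norm_tsum_le_tsum_norm ?_).trans (Summable.tsum_le_tsum ?_ ?_ ?_)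
        · exact (hinner k₁).norm
        · intro k₂
          rw [norm_mul]
          gcongr
          exact (f.le_opNorm _).trans (by gcongr; exact hC _)
        · exact (hinner k₁).norm
        · exact (hrow k₁).mul_right _
      · have : Summable fun k₁ => (∑' k₂, ‖b (k₁, k₂)‖) * (‖f‖ * C) := by
          have hsn : Summable fun k₁ => ∑' k₂, ‖b (k₁, k₂)‖ :=
            ((summable_prod_of_nonneg (fun p => norm_nonneg (b p))).mp hb).2
          exact hsn.mul_right _
        simpa only [tsum_mul_right] using this
    by_contra hne
    push_neg at hne
    obtain ⟨k₁, hk₁⟩ := hne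
    have hαne : α ≠ 0 := fun h0 => hk₁ (congrFun h0 k₁)
    exact hC3 α hαsum hαne (by rw [← hre]; exact h f)
  -- each row sums to zero against every functional, hence rows vanish
  have hrow0 : ∀ k₁, (∑' k₂, b (k₁, k₂) • x k₂) = 0 := by
    intro k₁
    apply NormedSpace.eq_zero_of_forall_dual_eq_zero ℂ
    intro f
    have hs : Summable fun k₂ => b (k₁, k₂) • x k₂ :=
      summable_of_C3 x hC3 _ (hrow k₁)
    rw [f.map_tsum hs]
    simpa only [map_smul, smul_eq_mul] using key f k₁
  funext p
  obtain ⟨k₁, k₂⟩ := p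
  by_contra hne
  have hβ : (fun k₂ => b (k₁, k₂)) ≠ 0 := fun h0 => hne (congrFun h0 k₂)
  exact hC3 _ (hrow k₁) hβ (hrow0 k₁)
end

section
/- Let {q_k} enumerate [0,1) ∩ ℚ, {r_m} enumerate ℤ, a > 1/2, and e_{a,k} = √(2a-1) ∑_m e^{i2π q_k r_m} m^{a-1} e_m ∈ E*. Then for any α ∈ ℓ¹(ℕ, ℂ) with α ≠ 0, the sum ∑_k α_k e_{a,k} is nonzero in E*; equivalently, there exists m with ∑_k α_k e^{i2π q_k r_m} ≠ 0. -/
open Filter Topology Complex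

/-- The enumeration `r 1 = 0, r 2 = 1, r 3 = -1, r 4 = 2, r 5 = -2, ...` of ℤ. -/
def statement7R (m : ℕ) : ℤ := if m % 2 = 0 then (m / 2 : ℤ) else -((m / 2 : ℤ))

/-- Cesàro averages of powers of a unit-modulus complex number `w ≠ 1` tend to zero. -/
lemma cesaro_pow_tendsto_zero {w : ℂ} (hw : ‖w‖ = 1) (hw1 : w ≠ 1) :
    Tendsto (fun N : ℕ => (N : ℂ)⁻¹ * ∑ n ∈ Finset.range N, w ^ n) atTop (𝓝 0) := by
  have hsub : w - 1 ≠ 0 := sub_ne_zero.mpr hw1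
  have hgeom : ∀ N : ℕ, ∑ n ∈ Finset.range N, w ^ n = (w ^ N - 1) / (w - 1) := by
    intro N
    rw [geom_sum_eq hw1]
  have hbound : ∀ N : ℕ, ‖(N : ℂ)⁻¹ * ∑ n ∈ Finset.range N, w ^ n‖
      ≤ (2 / ‖w - 1‖) / (N : ℝ) := by
    intro N
    rw [hgeom, norm_mul]
    have h1 : ‖(N : ℂ)⁻¹‖ = (N : ℝ)⁻¹ := by
      simp [norm_inv]
    have h2 : ‖(w ^ N - 1) / (w - 1)‖ ≤ 2 / ‖w - 1‖ := by
      rw [norm_div]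
      have hnum : ‖w ^ N - 1‖ ≤ 2 := by
        calc ‖w ^ N - 1‖ ≤ ‖w ^ N‖ + ‖(1 : ℂ)‖ := norm_sub_le _ _
          _ = 2 := by rw [norm_pow, hw]; norm_num
      calc ‖w ^ N - 1‖ / ‖w - 1‖ ≤ 2 / ‖w - 1‖ := by gcongr
        _ = 2 / ‖w - 1‖ := rfl
    calc ‖(N : ℂ)⁻¹‖ * ‖(w ^ N - 1) / (w - 1)‖
        ≤ (N : ℝ)⁻¹ * (2 / ‖w - 1‖) := by
          rw [h1]; exact mul_le_mul_of_nonneg_left h2 (by positivity)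
      _ = (2 / ‖w - 1‖) / (N : ℝ) := by ring
  have htend : Tendsto (fun N : ℕ => (2 / ‖w - 1‖) / (N : ℝ)) atTop (𝓝 0) :=
    tendsto_const_div_atTop_nhds_zero_nat _
  rw [tendsto_zero_iff_norm_tendsto_zero]
  exact squeeze_zero (fun N => norm_nonneg _) hbound htend

/-- condition (C3) for the Accardi–Ji–Saito example: any nonzero
ℓ¹ combination of the `e_{a,k}` has a nonvanishing coordinate, i.e. there is
`m` with `∑_k α_k e^{2πi q_k r_m} ≠ 0`. -/
theorem stmt7 (q : ℕ → ℚ) (hq_inj : Function.Injective q)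
    (hq_mem : ∀ k, 0 ≤ q k ∧ q k < 1)
    (hq_surj : ∀ x : ℚ, 0 ≤ x → x < 1 → ∃ k, q k = x)
    (a : ℝ) (ha : 1 / 2 < a)
    (α : ℕ → ℂ) (hα : Summable fun k => ‖α k‖) (hα0 : α ≠ 0) :
    ∃ m : ℕ, 1 ≤ m ∧
      (∑' k, α k *
        Complex.exp (Complex.I * 2 * Real.pi * (q k : ℂ) * (statement7R m : ℂ))) ≠ 0 := by
  by_contra hcon
  push_neg at hcon
  -- the unit-circle points
  set z : ℕ → ℂ := fun k => Complex.exp (Complex.I * 2 * Real.pi * (q k : ℂ)) with hz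
  have hz_abs : ∀ k, ‖z k‖ = 1 := by
    intro k
    rw [hz]
    simp only [Complex.norm_exp]
    have : (Complex.I * 2 * Real.pi * (q k : ℂ)).re = 0 := by
      simp [Complex.mul_re, Complex.mul_im]
    rw [this, Real.exp_zero]
  have hz_inj : Function.Injective z := by
    intro k l hkl
    apply hq_inj
    simp only [hz] at hkl
    rw [Complex.exp_eq_exp_iff_exists_int] at hkl
    obtain ⟨n, hn⟩ := hkl
    have : (Complex.I * 2 * Real.pi) * ((q k : ℂ) - (q l : ℂ) - n) = 0 := by
      have h2 : (n : ℂ) * (2 * Real.pi * Complex.I) = Complex.I * 2 * Real.pi * (n : ℂ) := by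
        ring
      rw [h2] at hn
      linear_combination hn
    have hne : (Complex.I * 2 * (Real.pi : ℂ)) ≠ 0 := by
      simp [Complex.I_ne_zero, Real.pi_ne_zero]
    have h0 : (q k : ℂ) - (q l : ℂ) - n = 0 := by
      rcases mul_eq_zero.mp this with h | h
      · exact absurd h hne
      · exact h
    have hq' : (q k : ℝ) - (q l : ℝ) = (n : ℝ) := by
      have := congrArg Complex.re h0
      simp at this
      linarith
    have hk := hq_mem k
    have hl := hq_mem l
    have hkR : (0:ℝ) ≤ (q k : ℝ) ∧ (q k : ℝ) < 1 := ⟨by exact_mod_cast hk.1, by exact_mod_cast hk.2⟩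
    have hlR : (0:ℝ) ≤ (q l : ℝ) ∧ (q l : ℝ) < 1 := ⟨by exact_mod_cast hl.1, by exact_mod_cast hl.2⟩
    have hn0 : n = 0 := by
      have h1 : (n : ℝ) < 1 := by rw [← hq']; linarith [hkR.2, hlR.1]
      have h2 : (-1 : ℝ) < (n : ℝ) := by rw [← hq']; linarith [hkR.1, hlR.2]
      have : -1 < n ∧ n < 1 := ⟨by exact_mod_cast h2, by exact_mod_cast h1⟩
      omega
    rw [hn0] at hq'
    have : (q k : ℝ) = (q l : ℝ) := by
      have h2 := hq'
      simp at h2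
      linarith
    exact_mod_cast this
  -- the hypothesis at nonnegative powers
  have h0 : ∀ n : ℕ, (∑' k, α k * z k ^ n) = 0 := by
    intro n
    rcases Nat.eq_zero_or_pos n with hn | hn
    · subst hn
      have := hcon 1 (le_refl 1)
      have hr : statement7R 1 = 0 := by decide
      simpa [hr] using this
    · have h2n : 1 ≤ 2 * n := by omega
      have := hcon (2 * n) h2n
      have hr : statement7R (2 * n) = (n : ℤ) := by
        unfold statement7R
        have : (2 * n) % 2 = 0 := by omega
        rw [if_pos this]
        push_cast
        omega
      rw [hr] at this
      have heq : ∀ k, Complex.exp (Complex.I * 2 * Real.pi * (q k : ℂ) * ((n : ℤ) : ℂ))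
          = z k ^ n := by
        intro k
        rw [hz]
        rw [← Complex.exp_nat_mul]
        congr 1
        push_cast
        ring
      simp_rw [heq] at this
      exact this
  -- obtain nonzero coordinate
  obtain ⟨j, hj⟩ : ∃ j, α j ≠ 0 := by
    by_contra h
    push_neg at h
    exact hα0 (funext h)
  -- Cesàro averaging against z j
  set w : ℕ → ℂ := fun k => z k * (z j)⁻¹ with hwdef
  have hzj0 : z j ≠ 0 := by
    intro h
    have := hz_abs j
    rw [h] at this
    simp at this
  have hw_abs : ∀ k, ‖w k‖ = 1 := by
    intro k
    simp [hwdef, map_mul, map_inv₀, hz_abs]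
  have hw_eq_one : ∀ k, w k = 1 ↔ k = j := by
    intro k
    constructor
    · intro h
      apply hz_inj
      simp only [hwdef] at h
      field_simp at h
      exact h
    · intro h; subst h; simp only [hwdef]; field_simp
  -- the averaged sums
  set A : ℕ → ℂ := fun N => ∑' k, α k * ((N : ℂ)⁻¹ * ∑ n ∈ Finset.range N, w k ^ n) with hA
  have hA_zero : ∀ N, A N = 0 := by
    intro N
    have hsum : ∀ n : ℕ, Summable (fun k => α k * ((z j)⁻¹ ^ n * z k ^ n)) := by
      intro n
      apply Summable.of_norm
      apply hα.of_nonneg_of_le (fun k => norm_nonneg _)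
      intro k
      rw [norm_mul, norm_mul, norm_pow, norm_pow]
      simp only [hz_abs, map_inv₀, hz_abs j]
      simp [hz_abs]
    have step : ∀ k, α k * ((N : ℂ)⁻¹ * ∑ n ∈ Finset.range N, w k ^ n)
        = (N : ℂ)⁻¹ * ∑ n ∈ Finset.range N, α k * ((z j)⁻¹ ^ n * z k ^ n) := by
      intro k
      have hwk : ∀ n : ℕ, w k ^ n = (z j)⁻¹ ^ n * z k ^ n := by
        intro n
        simp only [hwdef]
        rw [mul_pow]
        ring
      simp_rw [hwk, Finset.mul_sum]
      apply Finset.sum_congr rfl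
      intro n _
      ring
    rw [hA]
    simp_rw [step]
    rw [tsum_mul_left]
    rw [Summable.tsum_finsetSum (fun n _ => hsum n)]
    have : ∀ n ∈ Finset.range N, (∑' k, α k * ((z j)⁻¹ ^ n * z k ^ n)) = 0 := by
      intro n _
      have : (fun k => α k * ((z j)⁻¹ ^ n * z k ^ n))
          = fun k => (z j)⁻¹ ^ n * (α k * z k ^ n) := by
        funext k; ring
      rw [this, tsum_mul_left, h0 n, mul_zero]
    rw [Finset.sum_congr rfl this]
    simp
  -- dominated convergence: A N → α j
  have hA_tendsto : Tendsto A atTop (𝓝 (α j)) := by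
    have key : Tendsto A atTop (𝓝 (∑' k, α k * (if k = j then 1 else 0))) := by
      apply tendsto_tsum_of_dominated_convergence (bound := fun k => ‖α k‖) hα
      · intro k
        by_cases hkj : k = j
        · subst hkj
          have hw1 : w k = 1 := (hw_eq_one k).mpr rfl
          simp only [hw1, one_pow, Finset.sum_const, Finset.card_range, nsmul_eq_mul,
            mul_one, if_pos rfl]
          have : Tendsto (fun N : ℕ => (N : ℂ)⁻¹ * (N : ℂ)) atTop (𝓝 1) := by
            have : ∀ᶠ N : ℕ in atTop, (N : ℂ)⁻¹ * (N : ℂ) = 1 := by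
              filter_upwards [eventually_gt_atTop 0] with N hN
              have : (N : ℂ) ≠ 0 := Nat.cast_ne_zero.mpr hN.ne'
              field_simp
            exact Tendsto.congr' (Filter.EventuallyEq.symm this) tendsto_const_nhds
          simpa using (tendsto_const_nhds (x := α k)).mul this
        · have hw1 : w k ≠ 1 := fun h => hkj ((hw_eq_one k).mp h)
          have := (cesaro_pow_tendsto_zero (hw_abs k) hw1).const_mul (α k)
          simpa [hkj] using this
      · filter_upwards with N
        intro k
        rw [norm_mul]
        have hle : ‖(N : ℂ)⁻¹ * ∑ n ∈ Finset.range N, w k ^ n‖ ≤ 1 := by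
          rw [norm_mul]
          have h1 : ‖(N : ℂ)⁻¹‖ = (N : ℝ)⁻¹ := by simp [norm_inv]
          have h2 : ‖∑ n ∈ Finset.range N, w k ^ n‖ ≤ N := by
            calc ‖∑ n ∈ Finset.range N, w k ^ n‖ ≤ ∑ n ∈ Finset.range N, ‖w k ^ n‖ :=
              norm_sum_le _ _
              _ = ∑ n ∈ Finset.range N, 1 := by
                  apply Finset.sum_congr rfl
                  intro n _
                  simp [norm_pow, hw_abs]
              _ = N := by simp
          rcases Nat.eq_zero_or_pos N with hN | hN
          · subst hN; simp
          · rw [h1]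
            calc (N : ℝ)⁻¹ * ‖∑ n ∈ Finset.range N, w k ^ n‖ ≤ (N : ℝ)⁻¹ * N := by
                  apply mul_le_mul_of_nonneg_left h2 (by positivity)
              _ = 1 := by
                  field_simp
        calc ‖α k‖ * ‖(N : ℂ)⁻¹ * ∑ n ∈ Finset.range N, w k ^ n‖ ≤ ‖α k‖ * 1 :=
            mul_le_mul_of_nonneg_left hle (norm_nonneg _)
          _ = ‖α k‖ := mul_one _
    have : (∑' k, α k * (if k = j then 1 else 0)) = α j := by
      rw [show (fun k => α k * (if k = j then 1 else 0)) = fun k => if k = j then α j else 0 by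
        funext k; by_cases h : k = j <;> simp [h]]
      rw [tsum_eq_single j (fun b hb => if_neg hb)]
      simp
    rwa [this] at key
  have : (0 : ℂ) = α j := by
    have := Tendsto.congr' (by filter_upwards with N; rw [hA_zero N]) hA_tendsto
    exact tendsto_nhds_unique tendsto_const_nhds this
  exact hj this.symm
end

section
/- Let a > 1/2 and t_N := (1/N^{2a-1}) ∑_{j=1}^N z^{r_j} j^{2a-2} where z is a complex number of modulus 1 with z ≠ 1, and r_1=0, r_2=1, r_3=-1, r_4=2, r_5=-2, .... Assume z is a root of unity of order d ≥ 2. Then t_N → 0 as N → ∞. -/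
open scoped BigOperators
open Filter

/-- The enumeration `r 1 = 0, r 2 = 1, r 3 = -1, r 4 = 2, r 5 = -2, ...` of ℤ. -/
def statement18R (m : ℕ) : ℤ := if m % 2 = 0 then (m / 2 : ℤ) else -((m / 2 : ℤ))

lemma s18_pair (f : ℕ → ℂ) (d : ℕ) :
    ∑ j ∈ Finset.range (2*d), f j = ∑ i ∈ Finset.range d, (f (2*i) + f (2*i+1)) := by
  induction d with
  | zero => simp
  | succ n ih =>
      rw [show 2*(n+1) = (2*n+1)+1 by ring, Finset.sum_range_succ, Finset.sum_range_succ, ih,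
        Finset.sum_range_succ]
      ring

lemma s18_block {z : ℂ} (hz0 : z ≠ 0) (hz1 : z ≠ 1) (d : ℕ) (hzd : z ^ d = 1) :
    ∑ j ∈ Finset.range (2*d), z ^ statement18R (j+1) = 0 := by
  rw [s18_pair]
  have h1 : ∀ i : ℕ, z ^ statement18R (2*i+1) = (z⁻¹)^i := by
    intro i
    have h : (2*i+1) % 2 = 1 := by omega
    have hr : statement18R (2*i+1) = -(i:ℤ) := by
      rw [statement18R, h]; push_cast; omega
    rw [hr, zpow_neg, zpow_natCast, inv_pow]
  have h2 : ∀ i : ℕ, z ^ statement18R (2*i+2) = z * z^i := by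
    intro i
    have h : (2*i+2) % 2 = 0 := by omega
    have hr : statement18R (2*i+2) = (i:ℤ)+1 := by
      rw [statement18R, if_pos h]; push_cast; omega
    rw [hr, zpow_add₀ hz0, zpow_natCast, zpow_one, mul_comm]
  have e : ∀ i : ℕ, z ^ statement18R (2*i+1) + z ^ statement18R (2*i+1+1) = (z⁻¹)^i + z * z^i := by
    intro i
    rw [h1, show 2*i+1+1 = 2*i+2 by ring, h2]
  calc ∑ i ∈ Finset.range d, (z ^ statement18R (2*i+1) + z ^ statement18R (2*i+1+1))
      = ∑ i ∈ Finset.range d, ((z⁻¹)^i + z * z^i) := Finset.sum_congr rfl fun i _ => e i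
    _ = (∑ i ∈ Finset.range d, (z⁻¹)^i) + z * ∑ i ∈ Finset.range d, z^i := by
        rw [Finset.sum_add_distrib, Finset.mul_sum]
    _ = 0 := by
        have hzi1 : z⁻¹ ≠ 1 := fun h => hz1 (by rwa [inv_eq_one] at h)
        have hzid : (z⁻¹) ^ d = 1 := by rw [inv_pow, hzd, inv_one]
        rw [geom_sum_eq hzi1, geom_sum_eq hz1, hzid, hzd]
        simp

lemma s18_period {z : ℂ} (hz0 : z ≠ 0) (d m : ℕ) (hzd : z ^ d = 1) :
    z ^ statement18R (m + 2*d) = z ^ statement18R m := by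
  have h2 : (m + 2*d) % 2 = m % 2 := by omega
  by_cases h : m % 2 = 0
  · have hr : statement18R (m + 2*d) = statement18R m + d := by
      rw [statement18R, statement18R, h2, if_pos h, if_pos h]; push_cast; omega
    rw [hr, zpow_add₀ hz0, zpow_natCast, hzd, mul_one]
  · have hr : statement18R (m + 2*d) = statement18R m - d := by
      rw [statement18R, statement18R, h2, if_neg h, if_neg h]; push_cast; omega
    rw [hr, zpow_sub₀ hz0, zpow_natCast, hzd, div_one]

lemma s18_S_bound {z : ℂ} (hz_norm : ‖z‖ = 1) (hz1 : z ≠ 1) (d : ℕ) (hd : 1 ≤ d)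
    (hzd : z ^ d = 1) (n : ℕ) :
    ‖∑ j ∈ Finset.range n, z ^ statement18R (j+1)‖ ≤ 2*(d:ℝ) := by
  have hz0 : z ≠ 0 := fun h => by simp [h] at hz_norm
  induction n using Nat.strong_induction_on with
  | _ n ih =>
    by_cases h : n < 2*d
    · calc ‖∑ j ∈ Finset.range n, z ^ statement18R (j+1)‖
          ≤ ∑ j ∈ Finset.range n, ‖z ^ statement18R (j+1)‖ := norm_sum_le _ _
        _ = ∑ j ∈ Finset.range n, 1 := by
            refine Finset.sum_congr rfl fun j _ => ?_
            rw [norm_zpow, hz_norm, one_zpow]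
        _ = (n:ℝ) := by simp
        _ ≤ 2*(d:ℝ) := by exact_mod_cast h.le
    · obtain ⟨k, rfl⟩ : ∃ k, n = 2*d + k := ⟨n - 2*d, by omega⟩
      have hs : ∑ j ∈ Finset.range (2*d + k), z ^ statement18R (j+1)
          = ∑ j ∈ Finset.range k, z ^ statement18R (j+1) := by
        rw [Finset.sum_range_add, s18_block hz0 hz1 d hzd, zero_add]
        refine Finset.sum_congr rfl fun j _ => ?_
        rw [show 2*d + j + 1 = (j+1) + 2*d by ring, s18_period hz0 d (j+1) hzd]
      rw [hs]
      exact ih k (by omega)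


/-- for a root of unity `z ≠ 1` of order `d ≥ 2` and `a > 1/2`,
`N^{-(2a-1)} ∑_{j=1}^N z^{r_j} j^{2a-2} → 0`. -/
theorem stmt18 (a : ℝ) (ha : 1 / 2 < a) (z : ℂ) (hz_norm : ‖z‖ = 1)
    (hz1 : z ≠ 1) (d : ℕ) (hd : 2 ≤ d) (hzd : z ^ d = 1) :
    Tendsto (fun N : ℕ =>
        ((1 / (N : ℝ) ^ (2 * a - 1) : ℝ) : ℂ) *
          ∑ j ∈ Finset.Icc 1 N, z ^ (statement18R j) * (((j : ℝ) ^ (2 * a - 2) : ℝ) : ℂ))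
      atTop (nhds 0) := by

  have hd1 : 1 ≤ d := by omega
  have hz0 : z ≠ 0 := fun h => by simp [h] at hz_norm
  set c : ℝ := 2*a - 2 with hc
  set p : ℝ := 2*a - 1 with hp
  have hpc : c = p - 1 := by rw [hc, hp]; ring
  have hppos : 0 < p := by rw [hp]; linarith
  -- partial sums of z^{r_j}
  set S : ℕ → ℂ := fun n => ∑ j ∈ Finset.range n, z ^ statement18R (j+1) with hS
  have hSb : ∀ n, ‖S n‖ ≤ 2*(d:ℝ) := fun n => s18_S_bound hz_norm hz1 d hd1 hzd n
  -- the weights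
  set F : ℕ → ℂ := fun i => ((((i:ℝ)+1) ^ c : ℝ) : ℂ) with hF
  set g : ℕ → ℝ := fun i => ((i:ℝ)+1) ^ c with hg
  -- rewrite the Icc sum as a range sum
  have hsum : ∀ N : ℕ, ∑ j ∈ Finset.Icc 1 N, z ^ (statement18R j) * (((j : ℝ) ^ c : ℝ) : ℂ)
      = ∑ i ∈ Finset.range N, F i • (z ^ statement18R (i+1)) := by
    intro N
    rw [← Finset.Ico_add_one_right_eq_Icc, Finset.sum_Ico_eq_sum_range]
    refine Finset.sum_congr rfl fun i _ => ?_
    have e1 : statement18R (1+i) = statement18R (i+1) := by rw [Nat.add_comm]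
    have e2 : ((((1+i:ℕ):ℝ)^c : ℝ) : ℂ) = F i := by push_cast; rw [add_comm]
    rw [e1, e2, smul_eq_mul, mul_comm]
  -- bound on the variation of g
  have hgpos : ∀ i : ℕ, 0 ≤ g i := fun i => Real.rpow_nonneg (by positivity) _
  have hvar : ∀ m : ℕ, ∑ i ∈ Finset.range m, |g (i+1) - g i| ≤ g m + 1 := by
    intro m
    rcases le_or_gt 0 c with hcpos | hcneg
    · have : ∀ i ∈ Finset.range m, |g (i+1) - g i| = g (i+1) - g i := by
        intro i _
        rw [abs_of_nonneg]
        rw [sub_nonneg, hg]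
        exact Real.rpow_le_rpow (by positivity) (by push_cast; linarith) hcpos
      rw [Finset.sum_congr rfl this, Finset.sum_range_sub]
      have : 0 ≤ g 0 := hgpos 0
      linarith
    · have : ∀ i ∈ Finset.range m, |g (i+1) - g i| = g i - g (i+1) := by
        intro i _
        rw [abs_of_nonpos]
        · ring
        rw [sub_nonpos, hg]
        exact Real.rpow_le_rpow_of_nonpos (by positivity) (by push_cast; linarith) hcneg.le
      rw [Finset.sum_congr rfl this, Finset.sum_range_sub' (fun i => g i)]
      have h0 : g 0 = 1 := by rw [hg]; norm_num
      have := hgpos m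
      rw [h0]
      linarith
  -- norm bound for the weighted sum
  have hT : ∀ N : ℕ, 1 ≤ N →
      ‖∑ i ∈ Finset.range N, F i • (z ^ statement18R (i+1))‖
        ≤ 2*(d:ℝ) * (2 * (N:ℝ)^c + 1) := by
    intro N hN
    rw [Finset.sum_range_by_parts]
    have hFn : ∀ i : ℕ, ‖F i‖ = g i := by
      intro i
      show ‖((g i : ℝ) : ℂ)‖ = g i
      rw [Complex.norm_real, Real.norm_eq_abs, abs_of_nonneg (hgpos i)]
    have hgN : g (N-1) = (N:ℝ)^c := by
      have hcast : ((N-1:ℕ):ℝ) + 1 = (N:ℝ) := by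
        rw [Nat.cast_sub hN]; push_cast; ring
      show (((N-1:ℕ):ℝ)+1)^c = (N:ℝ)^c
      rw [hcast]
    calc ‖F (N-1) • S N - ∑ i ∈ Finset.range (N-1), (F (i+1) - F i) • S (i+1)‖
        ≤ ‖F (N-1) • S N‖ + ‖∑ i ∈ Finset.range (N-1), (F (i+1) - F i) • S (i+1)‖ :=
          norm_sub_le _ _
      _ ≤ g (N-1) * (2*(d:ℝ)) + ∑ i ∈ Finset.range (N-1), |g (i+1) - g i| * (2*(d:ℝ)) := by
          gcongr
          · rw [smul_eq_mul, norm_mul, hFn]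
            exact mul_le_mul_of_nonneg_left (hSb N) (hgpos _)
          · refine (norm_sum_le _ _).trans (Finset.sum_le_sum fun i _ => ?_)
            rw [smul_eq_mul, norm_mul]
            have : ‖F (i+1) - F i‖ = |g (i+1) - g i| := by
              show ‖((g (i+1) : ℝ) : ℂ) - ((g i : ℝ) : ℂ)‖ = _
              rw [← Complex.ofReal_sub, Complex.norm_real, Real.norm_eq_abs]
            rw [this]
            exact mul_le_mul_of_nonneg_left (hSb (i+1)) (abs_nonneg _)
      _ = (g (N-1) + ∑ i ∈ Finset.range (N-1), |g (i+1) - g i|) * (2*(d:ℝ)) := by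
          rw [← Finset.sum_mul]; ring
      _ ≤ ((N:ℝ)^c + (g (N-1) + 1)) * (2*(d:ℝ)) := by
          gcongr
          · exact le_of_eq hgN
          · exact hvar (N-1)
      _ = 2*(d:ℝ) * (2 * (N:ℝ)^c + 1) := by rw [hgN]; ring
  -- the explicit decaying bound
  set b : ℕ → ℝ := fun N => 2*(d:ℝ) * (2 * (N:ℝ)^(-1:ℝ) + (N:ℝ)^(-p)) with hb
  have hbnd : ∀ᶠ N : ℕ in atTop, ‖((1 / (N : ℝ) ^ p : ℝ) : ℂ) *
      ∑ j ∈ Finset.Icc 1 N, z ^ (statement18R j) * (((j : ℝ) ^ c : ℝ) : ℂ)‖ ≤ b N := by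
    filter_upwards [eventually_ge_atTop 1] with N hN
    have hNpos : (0:ℝ) < (N:ℝ) := by exact_mod_cast Nat.pos_of_ne_zero (by omega)
    have hNp : (0:ℝ) < (N:ℝ)^p := Real.rpow_pos_of_pos hNpos _
    rw [hsum N, norm_mul, Complex.norm_real, Real.norm_eq_abs, abs_of_nonneg (by positivity)]
    calc (1 / (N:ℝ)^p) * ‖∑ i ∈ Finset.range N, F i • (z ^ statement18R (i+1))‖
        ≤ (1 / (N:ℝ)^p) * (2*(d:ℝ) * (2 * (N:ℝ)^c + 1)) := by
          gcongr
          exact hT N hN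
      _ = b N := by
          simp only [hb]
          have h1 : (N:ℝ)^(-1:ℝ) = (N:ℝ)^c / (N:ℝ)^p := by
            rw [← Real.rpow_sub hNpos, hpc]; norm_num
          have h2 : (N:ℝ)^(-p) = 1 / (N:ℝ)^p := by
            rw [Real.rpow_neg hNpos.le, one_div]
          rw [h1, h2]
          field_simp
          try ring
  have hb0 : Tendsto b atTop (nhds 0) := by
    have h1 : Tendsto (fun N : ℕ => ((N:ℝ))^(-1:ℝ)) atTop (nhds 0) := by
      exact (tendsto_rpow_neg_atTop one_pos).comp tendsto_natCast_atTop_atTop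
    have h2 : Tendsto (fun N : ℕ => ((N:ℝ))^(-p)) atTop (nhds 0) :=
      (tendsto_rpow_neg_atTop hppos).comp tendsto_natCast_atTop_atTop
    have := ((h1.const_mul (2:ℝ)).add h2).const_mul (2*(d:ℝ))
    simpa using this
  exact squeeze_zero_norm' hbnd hb0
end
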